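/- Given m₀ > 0 there exists δ = δ(m₀) > 0 such that for all m ≥ m₀ and all tangent vectors {P, v} to ℍ³ with D({P,v}, {e^{-m} j, -j}) < δ, the closure of the shadow at infinity of the cone C(P, v, π/2) is contained in the shadow of the cone C(j, -j, π/2). -/

import Mathlib

open Real

/-- Euclidean inner product on tangent vectors to upper half-space `ℍ³ ≅ ℂ × ℝ`. -/
noncomputable def inn3 (a b : ℂ × ℝ) : ℝ := (a.1 * (starRingEnd ℂ) b.1).re + a.2 * b.2

/-- Euclidean norm of a tangent vector. -/
noncomputable def nrm3 (a : ℂ × ℝ) : ℝ := Real.sqrt (‖a.1‖ ^ 2 + a.2 ^ 2)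

/-- Euclidean angle between tangent vectors (after parallel transport). -/
noncomputable def angle3 (a b : ℂ × ℝ) : ℝ := Real.arccos (inn3 a b / (nrm3 a * nrm3 b))

/-- The quantity `D({P,u},{Q,v}) = max(|ht P/ht Q - 1|, |Z P - Z Q|, angle(u,v))`. -/
noncomputable def DD (P u Q v : ℂ × ℝ) : ℝ :=
  max (max |P.2 / Q.2 - 1| (‖P.1 - Q.1‖)) (angle3 u v)

/-- Direction (up to positive scalar) at `p = (z,t) ∈ ℍ³` of the geodesic ray from `p`
to the ideal point `ξ ∈ ℂ`: namely `(2 t (ξ - z), |ξ - z|² - t²)`. -/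
noncomputable def dirToward (p : ℂ × ℝ) (ξ : ℂ) : ℂ × ℝ :=
  ((2 * p.2 : ℝ) • (ξ - p.1), ‖ξ - p.1‖ ^ 2 - p.2 ^ 2)

/-- The shadow at infinity of the cone `C(p, v, θ)`: ideal points `ξ ∈ ℂ` such that the
geodesic ray from `p` to `ξ` makes an angle less than `θ` with direction `v`. -/
noncomputable def shadow (p v : ℂ × ℝ) (θ : ℝ) : Set ℂ :=
  {ξ : ℂ | angle3 (dirToward p ξ) v < θ}

lemma nrm3_sq (a : ℂ × ℝ) : nrm3 a ^ 2 = ‖a.1‖ ^ 2 + a.2 ^ 2 := by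
  rw [nrm3, sq_sqrt]; positivity

lemma nrm3_pos {a : ℂ × ℝ} (h : a ≠ 0) : 0 < nrm3 a := by
  rw [nrm3]
  apply Real.sqrt_pos.mpr
  by_contra hle
  push_neg at hle
  have h1 : ‖a.1‖ = 0 := by nlinarith [norm_nonneg a.1, sq_nonneg a.2]
  have h2 : a.2 = 0 := by nlinarith [norm_nonneg a.1, sq_nonneg (‖a.1‖)]
  exact h (Prod.ext (norm_eq_zero.mp h1) h2)

lemma inn3_pos_of_angle {a b : ℂ × ℝ} (ha : 0 < nrm3 a) (hb : 0 < nrm3 b)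
    (h : angle3 a b < π / 2) : 0 < inn3 a b := by
  rw [angle3, Real.arccos_lt_pi_div_two] at h
  have hp := mul_pos ha hb
  by_contra hle
  push_neg at hle
  have : inn3 a b / (nrm3 a * nrm3 b) ≤ 0 := div_nonpos_of_nonpos_of_nonneg hle hp.le
  linarith

lemma angle_lt_of_inn3_pos {a b : ℂ × ℝ} (ha : 0 < nrm3 a) (hb : 0 < nrm3 b)
    (h : 0 < inn3 a b) : angle3 a b < π / 2 := by
  rw [angle3, Real.arccos_lt_pi_div_two]
  positivity

lemma nrm3_dir_pos (p : ℂ × ℝ) (ξ : ℂ) (hp : 0 < p.2) : 0 < nrm3 (dirToward p ξ) := by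
  rw [nrm3, dirToward]
  apply Real.sqrt_pos.mpr
  simp only
  have h1 : ‖(2 * p.2 : ℝ) • (ξ - p.1)‖ = 2 * p.2 * ‖ξ - p.1‖ := by
    rw [Complex.real_smul, norm_mul, Complex.norm_real, Real.norm_eq_abs, abs_of_pos (by linarith)]
  rw [h1]
  set s := ‖ξ - p.1‖
  nlinarith [sq_nonneg s, mul_pos (mul_pos hp hp) (mul_pos hp hp),
    mul_nonneg (mul_nonneg (sq_nonneg s) hp.le) hp.le]

theorem stmt12 : ∀ m₀ > (0:ℝ), ∃ δ > (0:ℝ), ∀ m ≥ m₀, ∀ P v : ℂ × ℝ, 0 < P.2 → v ≠ 0 →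
    DD P v ((0 : ℂ), Real.exp (-m)) ((0 : ℂ), -1) < δ →
    closure (shadow P v (π / 2)) ⊆ shadow ((0 : ℂ), 1) ((0 : ℂ), -1) (π / 2) := by
  intro m₀ hm₀
  set c := Real.exp (-m₀) with hcdef
  have hc0 : 0 < c := Real.exp_pos _
  have hc1 : c < 1 := by
    rw [hcdef, show (1:ℝ) = Real.exp 0 by rw [Real.exp_zero]]
    exact Real.exp_lt_exp.mpr (by linarith)
  set δ := (1 - c) / 16 with hδdef
  have hδ0 : 0 < δ := by rw [hδdef]; linarith
  refine ⟨δ, hδ0, ?_⟩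
  intro m hm P v hP hv hD
  rw [DD] at hD
  simp only [max_lt_iff] at hD
  obtain ⟨⟨hD1, hD2⟩, hD3⟩ := hD
  have hδ16 : δ ≤ 1 / 16 := by rw [hδdef]; linarith
  -- height bound
  have hem : (0:ℝ) < Real.exp (-m) := Real.exp_pos _
  have hemc : Real.exp (-m) ≤ c := Real.exp_le_exp.mpr (by linarith)
  have ht : P.2 < c + δ := by
    have h' := (abs_lt.mp hD1).2
    have h'' : P.2 < (1 + δ) * Real.exp (-m) := by
      rw [← div_lt_iff₀ hem]
      linarith
    have h3 : (1 + δ) * Real.exp (-m) ≤ (1 + δ) * c :=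
      mul_le_mul_of_nonneg_left hemc (by linarith)
    have h4 : (0:ℝ) ≤ δ * (1 - c) := mul_nonneg hδ0.le (by linarith)
    nlinarith only [h'', h3, h4]
  have hz : ‖P.1‖ < δ := by simpa using hD2
  -- direction facts
  have hnv : 0 < nrm3 v := nrm3_pos hv
  have hnw : nrm3 ((0:ℂ), (-1:ℝ)) = 1 := by
    rw [nrm3]; simp
  have hinnv : inn3 v ((0:ℂ), (-1:ℝ)) = -v.2 := by
    rw [inn3]; simp
  have hnv2 : nrm3 v ^ 2 = ‖v.1‖ ^ 2 + v.2 ^ 2 := nrm3_sq v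
  obtain ⟨x, hxdef⟩ : ∃ x, inn3 v ((0:ℂ), (-1:ℝ)) / (nrm3 v * nrm3 ((0:ℂ), (-1:ℝ))) = x :=
    ⟨_, rfl⟩
  have hx : x = -v.2 / nrm3 v := by rw [← hxdef, hinnv, hnw, mul_one]
  have hv2sq : v.2 ^ 2 ≤ nrm3 v ^ 2 := by
    nlinarith only [hnv2, sq_nonneg (‖v.1‖)]
  have hxle : x ≤ 1 := by
    rw [hx, div_le_one hnv]
    nlinarith only [hv2sq, hnv, sq_nonneg (v.2 + nrm3 v)]
  have hxge : (-1:ℝ) ≤ x := by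
    rw [hx, le_div_iff₀ hnv]
    nlinarith only [hv2sq, hnv, sq_nonneg (v.2 - nrm3 v)]
  have hang : angle3 v ((0:ℂ), (-1:ℝ)) = Real.arccos x := by rw [angle3, hxdef]
  have hθ0 : 0 ≤ angle3 v ((0:ℂ), (-1:ℝ)) := hang ▸ Real.arccos_nonneg _
  have hcosx : Real.cos (angle3 v ((0:ℂ), (-1:ℝ))) = x := by
    rw [hang, Real.cos_arccos hxge hxle]
  have hxhalf : 1 / 2 ≤ x := by
    have hδpi : δ ≤ π / 3 := by nlinarith only [Real.pi_gt_three, hδ16]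
    have h1 : Real.cos (π / 3) ≤ Real.cos (angle3 v ((0:ℂ), (-1:ℝ))) :=
      Real.cos_le_cos_of_nonneg_of_le_pi hθ0 (by linarith [Real.pi_pos]) (by linarith)
    rw [Real.cos_pi_div_three] at h1
    linarith [hcosx ▸ h1]
  have hv2 : v.2 ≤ -(nrm3 v) / 2 := by
    rw [hx, le_div_iff₀ hnv] at hxhalf
    linarith
  have hv1 : ‖v.1‖ ≤ nrm3 v * δ := by
    have hsin : Real.sin (angle3 v ((0:ℂ), (-1:ℝ))) = Real.sqrt (1 - x ^ 2) := by
      rw [hang, Real.sin_arccos]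
    have hsinle : Real.sqrt (1 - x ^ 2) < δ := by
      rw [← hsin]
      calc Real.sin (angle3 v ((0:ℂ), (-1:ℝ))) ≤ angle3 v ((0:ℂ), (-1:ℝ)) := Real.sin_le hθ0
        _ < δ := hD3
    have h0 : (0:ℝ) ≤ 1 - x ^ 2 := by
      have h := mul_nonneg (by linarith : (0:ℝ) ≤ 1 - x) (by linarith : (0:ℝ) ≤ 1 + x)
      calc (0:ℝ) ≤ (1 - x) * (1 + x) := h
        _ = 1 - x ^ 2 := by ring
    have h1x : 1 - x ^ 2 < δ ^ 2 := by
      have h2 : Real.sqrt (1 - x ^ 2) ^ 2 < δ ^ 2 :=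
        pow_lt_pow_left₀ hsinle (Real.sqrt_nonneg _) two_ne_zero
      rwa [Real.sq_sqrt h0] at h2
    have hv2x : v.2 = -(nrm3 v) * x := by
      rw [hx]
      field_simp
    have e1 : ‖v.1‖ ^ 2 = nrm3 v ^ 2 * (1 - x ^ 2) := by
      have h2 := hnv2
      rw [hv2x] at h2
      linear_combination -h2
    have hsq : ‖v.1‖ ^ 2 ≤ (nrm3 v * δ) ^ 2 := by
      rw [e1]
      calc nrm3 v ^ 2 * (1 - x ^ 2) ≤ nrm3 v ^ 2 * δ ^ 2 :=
            mul_le_mul_of_nonneg_left h1x.le (sq_nonneg _)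
        _ = (nrm3 v * δ) ^ 2 := by ring
    have h3 := Real.sqrt_le_sqrt hsq
    rwa [Real.sqrt_sq (norm_nonneg _), Real.sqrt_sq (by positivity)] at h3
  -- the shadow is contained in the ball of radius r
  set r := (1 + c) / 2 with hrdef
  have hsub : shadow P v (π / 2) ⊆ Metric.ball (0:ℂ) r := by
    intro ξ hξ
    simp only [shadow, Set.mem_setOf_eq] at hξ
    simp only [Metric.mem_ball, Complex.dist_eq, sub_zero]
    by_contra hge
    push_neg at hge
    set s := ‖ξ - P.1‖ with hsdef
    have htri : ‖ξ‖ ≤ s + ‖P.1‖ := by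
      rw [hsdef]
      calc ‖ξ‖ = ‖(ξ - P.1) + P.1‖ := by ring_nf
        _ ≤ ‖ξ - P.1‖ + ‖P.1‖ := norm_add_le _ _
    have hs : r - δ ≤ s := by linarith only [htri, hge, hz]
    have hs0 : 0 < s := by
      linarith only [hs, hrdef, hδdef, hc0, hc1]
    have hinn := inn3_pos_of_angle (nrm3_dir_pos P ξ hP) hnv hξ
    have hcomp : inn3 (dirToward P ξ) v =
        ((2 * P.2 : ℝ) • (ξ - P.1) * (starRingEnd ℂ) v.1).re + (s ^ 2 - P.2 ^ 2) * v.2 := by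
      rw [inn3, dirToward]
    have hre : ((2 * P.2 : ℝ) • (ξ - P.1) * (starRingEnd ℂ) v.1).re
        ≤ 2 * P.2 * s * ‖v.1‖ := by
      calc ((2 * P.2 : ℝ) • (ξ - P.1) * (starRingEnd ℂ) v.1).re
          ≤ ‖(2 * P.2 : ℝ) • (ξ - P.1) * (starRingEnd ℂ) v.1‖ :=
            Complex.re_le_norm _
        _ = 2 * P.2 * s * ‖v.1‖ := by
            rw [norm_mul, Complex.real_smul, norm_mul, Complex.norm_real, Real.norm_eq_abs, Complex.norm_conj,
              abs_of_pos (by linarith)]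
    have htB : P.2 ≤ 17 / 16 := by linarith only [ht, hc1, hδ16]
    have h4 : 4 * P.2 * δ ≤ 4 * (17 / 16) * δ := by
      have hp := mul_nonneg (by linarith only [htB] : (0:ℝ) ≤ 17 / 16 - P.2) hδ0.le
      nlinarith only [hp]
    have hts : 4 * P.2 * δ < s - P.2 := by
      linarith only [h4, hs, ht, hδ0, hrdef, hδdef]
    have hst : P.2 < s := by
      have hp := mul_nonneg (mul_nonneg (by norm_num : (0:ℝ) ≤ 4) hP.le) hδ0.le
      linarith only [hts, hp]
    have hkey : 4 * P.2 * s * δ < s ^ 2 - P.2 ^ 2 := by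
      have h5 := mul_lt_mul_of_pos_right hts hs0
      have h6 := mul_pos (sub_pos.mpr hst) hP
      nlinarith only [h5, h6]
    have habs1 : 2 * P.2 * s * ‖v.1‖ ≤ 2 * P.2 * s * (nrm3 v * δ) :=
      mul_le_mul_of_nonneg_left hv1 (by positivity)
    have hsq0 : (0:ℝ) ≤ s ^ 2 - P.2 ^ 2 := by
      have hp := mul_nonneg (mul_nonneg (mul_nonneg (by norm_num : (0:ℝ) ≤ 4) hP.le) hs0.le)
        hδ0.le
      nlinarith only [hkey, hp]
    have hsecond : (s ^ 2 - P.2 ^ 2) * v.2 ≤ (s ^ 2 - P.2 ^ 2) * (-(nrm3 v) / 2) :=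
      mul_le_mul_of_nonneg_left hv2 hsq0
    have hfin : 2 * P.2 * s * (nrm3 v * δ) + (s ^ 2 - P.2 ^ 2) * (-(nrm3 v) / 2) < 0 := by
      have h5 := mul_lt_mul_of_pos_left hkey hnv
      nlinarith only [h5]
    have hneg : inn3 (dirToward P ξ) v < 0 := by
      rw [hcomp]
      linarith only [hre, habs1, hsecond, hfin]
    linarith only [hinn, hneg]
  -- conclude
  intro ξ hξcl
  have hcl : ξ ∈ Metric.closedBall (0:ℂ) r :=
    Metric.closure_ball_subset_closedBall (closure_mono hsub hξcl)
  have hr : ‖ξ‖ ≤ r := by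
    simpa [Complex.dist_eq] using hcl
  simp only [shadow, Set.mem_setOf_eq]
  apply angle_lt_of_inn3_pos (nrm3_dir_pos _ _ (by norm_num)) (by rw [hnw]; norm_num)
  have hcomp : inn3 (dirToward ((0:ℂ), (1:ℝ)) ξ) ((0:ℂ), (-1:ℝ)) = 1 - ‖ξ‖ ^ 2 := by
    rw [inn3, dirToward]
    simp
  rw [hcomp]
  have hrlt : r < 1 := by rw [hrdef]; linarith
  have ha1 : ‖ξ‖ < 1 := lt_of_le_of_lt hr hrlt
  have hp := mul_pos (by linarith only [ha1] : (0:ℝ) < 1 - ‖ξ‖)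
    (by linarith only [norm_nonneg ξ] : (0:ℝ) < 1 + ‖ξ‖)
  nlinarith only [hp]
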